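/- arXiv:1004.1687 — 4 statements merged into one kernel-verified Lean document; each statement's English description precedes it below -/
import Mathlib

section
/- Let U(z) = ∏_{i=1}^{8}(z - u_i) with coefficients m_j defined via U(z) = Σ_{i=0}^{8}(-1)^i m_{8-i} z^i, and let h ∈ ℂ \ {0}. Then there exists a polynomial P_d(h, ·) such that for all nonzero z with z² ≠ h, (z - h/z)·P_d(h, z + h/z) = z⁵·U(h/z) - (h/z)⁵·U(z). Moreover P_d(h,x) = m₈x⁴ - h m₇x³ + (h²m₆ - 3h m₈ - h⁵m₀)x² + (2h²m₇ - h³m₅ + h⁵m₁)x + (h⁶m₀ - h⁵m₂ + h⁴m₄ - h³m₆ + h²m₈). -/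
open Finset in
theorem stmt2 (u : Fin 8 → ℂ) (m : ℕ → ℂ)
    (hm : ∀ z : ℂ, ∏ i, (z - u i) = ∑ i ∈ Finset.range 9, (-1 : ℂ) ^ i * m (8 - i) * z ^ i)
    (h : ℂ) (hh : h ≠ 0) :
    ∃ P : Polynomial ℂ,
      (∀ z : ℂ, z ≠ 0 → z ^ 2 ≠ h →
        (z - h / z) * P.eval (z + h / z) =
          z ^ 5 * (∏ i, (h / z - u i)) - (h / z) ^ 5 * ∏ i, (z - u i)) ∧
      (∀ x : ℂ, P.eval x =
        m 8 * x ^ 4 - h * m 7 * x ^ 3 + (h ^ 2 * m 6 - 3 * h * m 8 - h ^ 5 * m 0) * x ^ 2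
          + (2 * h ^ 2 * m 7 - h ^ 3 * m 5 + h ^ 5 * m 1) * x
          + (h ^ 6 * m 0 - h ^ 5 * m 2 + h ^ 4 * m 4 - h ^ 3 * m 6 + h ^ 2 * m 8)) := by
  refine ⟨Polynomial.C (m 8) * Polynomial.X ^ 4 - Polynomial.C (h * m 7) * Polynomial.X ^ 3
      + Polynomial.C (h ^ 2 * m 6 - 3 * h * m 8 - h ^ 5 * m 0) * Polynomial.X ^ 2
      + Polynomial.C (2 * h ^ 2 * m 7 - h ^ 3 * m 5 + h ^ 5 * m 1) * Polynomial.X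
      + Polynomial.C (h ^ 6 * m 0 - h ^ 5 * m 2 + h ^ 4 * m 4 - h ^ 3 * m 6 + h ^ 2 * m 8),
      ?_, ?_⟩
  · intro z hz _
    obtain ⟨w, rfl⟩ : ∃ w, h = z * w := ⟨h / z, (mul_div_cancel₀ h hz).symm⟩
    rw [mul_div_cancel_left₀ _ hz, hm, hm]
    simp only [Finset.sum_range_succ, Finset.sum_range_zero, Polynomial.eval_add,
      Polynomial.eval_sub, Polynomial.eval_mul, Polynomial.eval_pow, Polynomial.eval_C,
      Polynomial.eval_X]
    ring
  · intro x
    simp only [Polynomial.eval_add, Polynomial.eval_sub, Polynomial.eval_mul,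
      Polynomial.eval_pow, Polynomial.eval_C, Polynomial.eval_X]
end

section
/- Fix g, h₁, h₂, q and P_n(h₂,g), P_d(h₂,g) with P_d(h₂,g) ≠ 0, and let f, f̄ satisfy V(f̄, f) = 0 with V as in the paper. Define φ = (f-g)(f/h₁-g/h₂) - (h₁-h₂)(1/h₁-1/h₂) and φ_u = (f̄-g)(f̄q/h₁-g/h₂) - (h₁/q-h₂)(q/h₁-1/h₂). Then the rational function R(x₁,x₂) = (f-x₁)V(x₂,f) / ((f̄-x₂)V(f̄,x₁)) is independent of x₁ and x₂, and equals (h₁-h₂q)φ / ((h₁-h₂)φ_u), assuming all denominators are nonzero. -/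
noncomputable def Pn (m : ℕ → ℂ) (h x : ℂ) : ℂ :=
  m 0 * x ^ 4 - m 1 * x ^ 3 + (m 2 - 3 * h * m 0 - h⁻¹ ^ 3 * m 8) * x ^ 2
    + (2 * h * m 1 - m 3 + h⁻¹ ^ 2 * m 7) * x
    + (h ^ 2 * m 0 - h * m 2 + m 4 - h⁻¹ * m 6 + h⁻¹ ^ 2 * m 8)

noncomputable def Pd (m : ℕ → ℂ) (h x : ℂ) : ℂ :=
  m 8 * x ^ 4 - h * m 7 * x ^ 3 + (h ^ 2 * m 6 - 3 * h * m 8 - h ^ 5 * m 0) * x ^ 2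
    + (2 * h ^ 2 * m 7 - h ^ 3 * m 5 + h ^ 5 * m 1) * x
    + (h ^ 6 * m 0 - h ^ 5 * m 2 + h ^ 4 * m 4 - h ^ 3 * m 6 + h ^ 2 * m 8)

noncomputable def Vpol (m : ℕ → ℂ) (h₁ h₂ q g f₀ f : ℂ) : ℂ :=
  q * ((f₀ - g) * (f - g) - (h₁ / q - h₂) * (h₁ - h₂) / h₂) * Pd m h₂ g
    - h₁ ^ 2 * h₂ ^ 4 *
      ((f₀ * q / h₁ - g / h₂) * (f / h₁ - g / h₂)
        - (q / h₁ - 1 / h₂) * (1 / h₁ - 1 / h₂) * h₂) * Pn m h₂ g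

/-- Clearing denominators in `Vpol`. -/
lemma Vpol_clear (m : ℕ → ℂ) (h₁ h₂ q : ℂ) (hh₁ : h₁ ≠ 0) (hh₂ : h₂ ≠ 0) (hq : q ≠ 0)
    (g f₀ f : ℂ) :
    h₂ * Vpol m h₁ h₂ q g f₀ f
      = q * h₂ * (f₀ - g) * (f - g) * Pd m h₂ g
        - (h₁ - h₂ * q) * (h₁ - h₂) * Pd m h₂ g
        - h₂ ^ 3 * (f₀ * q * h₂ - g * h₁) * (f * h₂ - g * h₁) * Pn m h₂ g
        + h₂ ^ 4 * (q * h₂ - h₁) * (h₂ - h₁) * Pn m h₂ g := by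
  simp only [Vpol]
  field_simp
  ring

theorem stmt9 (m : ℕ → ℂ) (h₁ h₂ q : ℂ) (hh₁ : h₁ ≠ 0) (hh₂ : h₂ ≠ 0) (hq : q ≠ 0)
    (h12 : h₁ ≠ h₂) (h12q : h₁ ≠ h₂ * q)
    (g f fb : ℂ)
    (hPd : Pd m h₂ g ≠ 0)
    (hV : Vpol m h₁ h₂ q g fb f = 0)
    (φ φu : ℂ)
    (hφ : φ = (f - g) * (f / h₁ - g / h₂) - (h₁ - h₂) * (1 / h₁ - 1 / h₂))
    (hφu : φu = (fb - g) * (fb * q / h₁ - g / h₂) - (h₁ / q - h₂) * (q / h₁ - 1 / h₂))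
    (hφu0 : φu ≠ 0) :
    ∀ x₁ x₂ : ℂ, (fb - x₂) * Vpol m h₁ h₂ q g fb x₁ ≠ 0 →
      (f - x₁) * Vpol m h₁ h₂ q g x₂ f / ((fb - x₂) * Vpol m h₁ h₂ q g fb x₁)
        = (h₁ - h₂ * q) * φ / ((h₁ - h₂) * φu) := by
  intro x₁ x₂ hne
  have h12' : h₁ - h₂ ≠ 0 := sub_ne_zero.mpr h12
  have hden : (h₁ - h₂) * φu ≠ 0 := mul_ne_zero h12' hφu0
  rw [div_eq_div_iff hne hden]
  set A := Pn m h₂ g with hA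
  set B := Pd m h₂ g with hB
  have hA2 := Vpol_clear m h₁ h₂ q hh₁ hh₂ hq g x₂ f
  have hA1 := Vpol_clear m h₁ h₂ q hh₁ hh₂ hq g fb x₁
  have hA0 := Vpol_clear m h₁ h₂ q hh₁ hh₂ hq g fb f
  rw [← hA, ← hB] at hA2 hA1 hA0
  have hφh : h₁ * h₂ * φ = (f - g) * (f * h₂ - g * h₁) + (h₁ - h₂) ^ 2 := by
    subst hφ; field_simp; ring
  have hφuh : q * h₁ * h₂ * φu
      = q * (fb - g) * (fb * q * h₂ - g * h₁) + (h₁ - h₂ * q) ^ 2 := by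
    subst hφu; field_simp; ring
  have hN : (q * h₁ * h₂ ^ 2 : ℂ) ≠ 0 := by
    simp [hq, hh₁, hh₂]
  apply mul_left_cancel₀ hN
  linear_combination
    (f - x₁) * (h₁ - h₂) * (q * h₁ * h₂ * φu) * hA2
    + (f - x₁) * (h₁ - h₂)
        * (q * h₂ * (x₂ - g) * (f - g) * B - (h₁ - h₂ * q) * (h₁ - h₂) * B
          - h₂ ^ 3 * (x₂ * q * h₂ - g * h₁) * (f * h₂ - g * h₁) * A
          + h₂ ^ 4 * (q * h₂ - h₁) * (h₂ - h₁) * A) * hφuh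
    - q * (h₁ - h₂ * q) * (fb - x₂) * (h₂ * Vpol m h₁ h₂ q g fb x₁) * hφh
    - q * (h₁ - h₂ * q) * (fb - x₂)
        * ((f - g) * (f * h₂ - g * h₁) + (h₁ - h₂) ^ 2) * hA1
    - ((h₁ - h₂) * (q * (fb - g) * (fb * q * h₂ - g * h₁) + (h₁ - h₂ * q) ^ 2) * (f - x₁)
        - q * (h₁ - h₂ * q) * ((f - g) * (f * h₂ - g * h₁) + (h₁ - h₂) ^ 2) * (fb - x₂)
        - q * h₂ * ((h₁ - h₂ * q) * (g - f) + q * (h₁ - h₂) * (fb - g))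
            * (f - x₁) * (fb - x₂)) * hA0
    + ((h₁ - h₂) * (q * (fb - g) * (fb * q * h₂ - g * h₁) + (h₁ - h₂ * q) ^ 2) * (f - x₁)
        - q * (h₁ - h₂ * q) * ((f - g) * (f * h₂ - g * h₁) + (h₁ - h₂) ^ 2) * (fb - x₂)
        - q * h₂ * ((h₁ - h₂ * q) * (g - f) + q * (h₁ - h₂) * (fb - g))
            * (f - x₁) * (fb - x₂)) * h₂ * hV
end

section
/- With r as above and c the swap h₁ ↔ h₂, the composition T₁ = c∘r∘c∘r acts on parameters by T₁(h₁) = (h₁/q)v², T₁(h₂) = q·h₂·v², and T₁(u_i) = u_i·v for all i, where v = q·h₂/h₁. Consequently, after rescaling all of h₁ (by v⁻²), h₂ (by v⁻²), u_i (by v⁻¹), T₁ realizes the map (h₁, h₂, u₁,…,u₈) ↦ (h₁/q, h₂q, u₁,…,u₈). -/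
/-- The transformation s_{ij}, swapping u_i and u_j. -/
def sgen (i j : Fin 8) : ℂ × ℂ × (Fin 8 → ℂ) → ℂ × ℂ × (Fin 8 → ℂ) :=
  fun p => (p.1, p.2.1, p.2.2 ∘ Equiv.swap i j)

/-- The transformation μ_{ij}: h₁ ↦ h₁h₂/(u_iu_j), u_i ↦ h₂/u_j, u_j ↦ h₂/u_i. -/
noncomputable def mugen (i j : Fin 8) : ℂ × ℂ × (Fin 8 → ℂ) → ℂ × ℂ × (Fin 8 → ℂ) :=
  fun p => (p.1 * p.2.1 / (p.2.2 i * p.2.2 j), p.2.1,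
    fun k => if k = i then p.2.1 / p.2.2 j else if k = j then p.2.1 / p.2.2 i else p.2.2 k)

/-- The composition r = s₁₂μ₁₂ s₃₄μ₃₄ s₅₆μ₅₆ s₇₈μ₇₈. -/
noncomputable def rmap : ℂ × ℂ × (Fin 8 → ℂ) → ℂ × ℂ × (Fin 8 → ℂ) :=
  sgen 0 1 ∘ mugen 0 1 ∘ sgen 2 3 ∘ mugen 2 3 ∘ sgen 4 5 ∘ mugen 4 5 ∘ sgen 6 7 ∘ mugen 6 7

/-- The transformation c swapping h₁ and h₂. -/
def cswap : ℂ × ℂ × (Fin 8 → ℂ) → ℂ × ℂ × (Fin 8 → ℂ) :=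
  fun p => (p.2.1, p.1, p.2.2)

/-- The translation T₁ = c r c r. -/
noncomputable def T1 : ℂ × ℂ × (Fin 8 → ℂ) → ℂ × ℂ × (Fin 8 → ℂ) :=
  cswap ∘ rmap ∘ cswap ∘ rmap

lemma rmap_eq (a b : ℂ) (w : Fin 8 → ℂ) :
    rmap (a, b, w) = (a * b ^ 4 / (w 0 * w 1 * w 2 * w 3 * w 4 * w 5 * w 6 * w 7), b,
      fun i => b / w i) := by
  refine Prod.ext ?_ (Prod.ext ?_ (funext fun i => ?_))
  · simp only [rmap, sgen, mugen, cswap, Function.comp_apply]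
    simp (config := { decide := true }) [Equiv.swap_apply_def]
    ring
  · simp only [rmap, sgen, mugen, cswap, Function.comp_apply]
  · fin_cases i <;>
    · simp only [rmap, sgen, mugen, cswap, Function.comp_apply]
      simp (config := { decide := true }) [Equiv.swap_apply_def]

set_option maxHeartbeats 1600000 in
theorem stmt15 (h₁ h₂ : ℂ) (u : Fin 8 → ℂ)
    (hh₁ : h₁ ≠ 0) (hh₂ : h₂ ≠ 0) (hu : ∀ i, u i ≠ 0)
    (q v : ℂ) (hq : q = h₁ ^ 2 * h₂ ^ 2 / ∏ i, u i) (hv : v = q * h₂ / h₁) :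
    ((T1 (h₁, h₂, u)).1 = h₁ / q * v ^ 2 ∧ (T1 (h₁, h₂, u)).2.1 = q * h₂ * v ^ 2 ∧
      ∀ i, (T1 (h₁, h₂, u)).2.2 i = u i * v) ∧
    ((T1 (h₁, h₂, u)).1 * v⁻¹ ^ 2 = h₁ / q ∧ (T1 (h₁, h₂, u)).2.1 * v⁻¹ ^ 2 = h₂ * q ∧
      ∀ i, (T1 (h₁, h₂, u)).2.2 i * v⁻¹ = u i) := by
  have hP : (∏ i, u i) = u 0 * u 1 * u 2 * u 3 * u 4 * u 5 * u 6 * u 7 :=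
    Fin.prod_univ_eight u
  rw [hP] at hq
  have hPne : u 0 * u 1 * u 2 * u 3 * u 4 * u 5 * u 6 * u 7 ≠ 0 := by
    apply_rules [mul_ne_zero]
  have hqne : q ≠ 0 := by
    rw [hq]
    exact div_ne_zero (mul_ne_zero (pow_ne_zero 2 hh₁) (pow_ne_zero 2 hh₂)) hPne
  have hvne : v ≠ 0 := by
    rw [hv]; exact div_ne_zero (mul_ne_zero hqne hh₂) hh₁
  have hT : T1 (h₁, h₂, u) =
      (h₁ * h₂ ^ 4 / (u 0 * u 1 * u 2 * u 3 * u 4 * u 5 * u 6 * u 7),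
       h₂ * (h₁ * h₂ ^ 4 / (u 0 * u 1 * u 2 * u 3 * u 4 * u 5 * u 6 * u 7)) ^ 4 /
         ((h₂ / u 0) * (h₂ / u 1) * (h₂ / u 2) * (h₂ / u 3) * (h₂ / u 4) * (h₂ / u 5) *
           (h₂ / u 6) * (h₂ / u 7)),
       fun i => (h₁ * h₂ ^ 4 / (u 0 * u 1 * u 2 * u 3 * u 4 * u 5 * u 6 * u 7)) / (h₂ / u i)) := by
    simp only [T1, Function.comp_apply, rmap_eq, cswap]
  have main : (T1 (h₁, h₂, u)).1 = h₁ / q * v ^ 2 ∧ (T1 (h₁, h₂, u)).2.1 = q * h₂ * v ^ 2 ∧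
      ∀ i, (T1 (h₁, h₂, u)).2.2 i = u i * v := by
    have h0 := hu 0; have h1 := hu 1; have h2 := hu 2; have h3 := hu 3
    have h4 := hu 4; have h5 := hu 5; have h6 := hu 6; have h7 := hu 7
    rw [hT]
    refine ⟨?_, ?_, fun i => ?_⟩
    · subst hq hv; field_simp
    · have hD : h₂ / u 0 * (h₂ / u 1) * (h₂ / u 2) * (h₂ / u 3) * (h₂ / u 4) * (h₂ / u 5) *
          (h₂ / u 6) * (h₂ / u 7) =
          h₂ ^ 8 / (u 0 * u 1 * u 2 * u 3 * u 4 * u 5 * u 6 * u 7) := by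
        field_simp
      rw [hD]
      subst hq hv; field_simp
    · have hui := hu i
      show h₁ * h₂ ^ 4 / (u 0 * u 1 * u 2 * u 3 * u 4 * u 5 * u 6 * u 7) / (h₂ / u i) = u i * v
      subst hq hv; field_simp
  refine ⟨main, ?_, ?_, fun i => ?_⟩
  · rw [main.1]; field_simp
  · rw [main.2.1]; field_simp
  · rw [main.2.2 i]; field_simp
end

section
/- Let U(z) = ∏_{i=1}^{8}(z-u_i) with (u₁,…,u₈) = (b₁,b₂,b₃,b₄, ε/b₅, ε/b₆, ε/b₇, ε/b₈) and h₂ = ε/t, and let g be fixed nonzero. Then as ε → 0, P_n(h₂, g) → g⁴·B₁(1/g), where B₁(z) = ∏_{i=1}^{4}(1 - b_i z) and P_n is the explicit quartic built from the coefficients m_j of U and h = h₂. -/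
open Finset in
theorem stmt16 (b : Fin 8 → ℂ) (t : ℂ) (hb : ∀ i, b i ≠ 0) (ht : t ≠ 0)
    (g : ℂ) (hg : g ≠ 0)
    (u : ℂ → Fin 8 → ℂ)
    (hu : ∀ ε, u ε = ![b 0, b 1, b 2, b 3, ε / b 4, ε / b 5, ε / b 6, ε / b 7])
    (m : ℂ → ℕ → ℂ)
    (hm : ∀ ε j, m ε j = ∑ s ∈ Finset.univ.powersetCard j, ∏ i ∈ s, u ε i)
    (Pn : ℂ → ℂ)
    (hPn : ∀ ε, Pn ε =
      m ε 0 * g ^ 4 - m ε 1 * g ^ 3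
        + (m ε 2 - 3 * (ε / t) * m ε 0 - (ε / t)⁻¹ ^ 3 * m ε 8) * g ^ 2
        + (2 * (ε / t) * m ε 1 - m ε 3 + (ε / t)⁻¹ ^ 2 * m ε 7) * g
        + ((ε / t) ^ 2 * m ε 0 - (ε / t) * m ε 2 + m ε 4 - (ε / t)⁻¹ * m ε 6
            + (ε / t)⁻¹ ^ 2 * m ε 8))
    (B₁ : ℂ → ℂ) (hB₁ : ∀ z, B₁ z = ∏ i ∈ ({0, 1, 2, 3} : Finset (Fin 8)), (1 - b i * z)) :
    Filter.Tendsto Pn (nhdsWithin 0 {0}ᶜ) (nhds (g ^ 4 * B₁ (1 / g))) := by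
  classical
  obtain ⟨upper, hupper⟩ : ∃ s : Finset (Fin 8), s = {4,5,6,7} := ⟨_, rfl⟩
  obtain ⟨w, hw⟩ : ∃ w : Fin 8 → ℂ, ∀ i, w i = if i ∈ upper then (b i)⁻¹ else b i :=
    ⟨_, fun _ => rfl⟩
  have hmemu : ∀ (ε : ℂ), ∀ i ∈ upper, u ε i = ε * w i := by
    intro ε i hi
    rw [hupper] at hi
    fin_cases hi <;>
      rw [hu, hw] <;> rw [if_pos (by rw [hupper]; decide)] <;>
      exact div_eq_mul_inv _ _
  have hmeml : ∀ (ε : ℂ), ∀ i, i ∉ upper → u ε i = w i := by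
    intro ε i hi
    rw [hupper] at hi
    rw [hu, hw, if_neg (by rw [hupper]; exact hi)]
    fin_cases i <;> first | rfl | (exact absurd (by decide) hi)
  have hprod : ∀ (ε : ℂ) (s : Finset (Fin 8)),
      ∏ i ∈ s, u ε i = ε ^ (s ∩ upper).card * ∏ i ∈ s, w i := by
    intro ε s
    rw [← Finset.prod_filter_mul_prod_filter_not s (· ∈ upper) (u ε),
        ← Finset.prod_filter_mul_prod_filter_not s (· ∈ upper) w]
    have h1 : ∏ i ∈ s.filter (· ∈ upper), u ε i
        = ∏ i ∈ s.filter (· ∈ upper), (ε * w i) :=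
      Finset.prod_congr rfl fun i hi => hmemu ε i (Finset.mem_filter.mp hi).2
    have h2 : ∏ i ∈ s.filter (¬ · ∈ upper), u ε i
        = ∏ i ∈ s.filter (¬ · ∈ upper), w i :=
      Finset.prod_congr rfl fun i hi => hmeml ε i (Finset.mem_filter.mp hi).2
    rw [h1, h2, Finset.prod_mul_distrib, Finset.prod_const, Finset.filter_mem_eq_inter]
    ring
  have hcard : ∀ (j : ℕ), ∀ s ∈ (Finset.univ : Finset (Fin 8)).powersetCard j,
      j - 4 ≤ (s ∩ upper).card := by
    intro j s hs
    have h1 : (s ∩ upper).card + (s \ upper).card = s.card :=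
      Finset.card_inter_add_card_sdiff s upper
    have h2 : s.card = j := (Finset.mem_powersetCard.mp hs).2
    have h3 : (s \ upper).card ≤ 4 := by
      have hsub : s \ upper ⊆ upperᶜ := by
        intro i hi
        simp only [Finset.mem_sdiff] at hi
        simpa using hi.2
      have h4 := Finset.card_le_card hsub
      have h5 : (upperᶜ : Finset (Fin 8)).card = 4 := by rw [hupper]; decide
      omega
    omega
  obtain ⟨N, hN⟩ : ∃ N : ℕ → ℂ → ℂ, ∀ j ε, N j ε =
      ∑ s ∈ (Finset.univ : Finset (Fin 8)).powersetCard j,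
        ε ^ ((s ∩ upper).card - (j - 4)) * ∏ i ∈ s, w i := ⟨_, fun _ _ => rfl⟩
  have hmN : ∀ (ε : ℂ) (j : ℕ), m ε j = ε ^ (j - 4) * N j ε := by
    intro ε j
    rw [hm, hN, Finset.mul_sum]
    refine Finset.sum_congr rfl fun s hs => ?_
    rw [hprod, ← mul_assoc, ← pow_add]
    congr 2
    have := hcard j s hs
    omega
  have hNc : ∀ j, Continuous (N j) := by
    intro j
    have : N j = fun ε => ∑ s ∈ (Finset.univ : Finset (Fin 8)).powersetCard j,
        ε ^ ((s ∩ upper).card - (j - 4)) * ∏ i ∈ s, w i := funext fun ε => hN j ε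
    rw [this]
    exact continuous_finset_sum _ fun s _ => (continuous_pow _).mul continuous_const
  obtain ⟨F, hF⟩ : ∃ F : ℂ → ℂ, ∀ ε, F ε =
      N 0 ε * g ^ 4 - N 1 ε * g ^ 3
        + (N 2 ε - 3 * (ε / t) * N 0 ε - t ^ 3 * ε * N 8 ε) * g ^ 2
        + (2 * (ε / t) * N 1 ε - N 3 ε + t ^ 2 * ε * N 7 ε) * g
        + ((ε / t) ^ 2 * N 0 ε - (ε / t) * N 2 ε + N 4 ε - t * ε * N 6 ε
            + t ^ 2 * ε ^ 2 * N 8 ε) := ⟨_, fun _ => rfl⟩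
  have hFc : Continuous F := by
    have hFe : F = fun ε =>
        N 0 ε * g ^ 4 - N 1 ε * g ^ 3
        + (N 2 ε - 3 * (ε / t) * N 0 ε - t ^ 3 * ε * N 8 ε) * g ^ 2
        + (2 * (ε / t) * N 1 ε - N 3 ε + t ^ 2 * ε * N 7 ε) * g
        + ((ε / t) ^ 2 * N 0 ε - (ε / t) * N 2 ε + N 4 ε - t * ε * N 6 ε
            + t ^ 2 * ε ^ 2 * N 8 ε) := funext hF
    rw [hFe]
    have h0 := hNc 0; have h1 := hNc 1; have h2 := hNc 2; have h3 := hNc 3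
    have h4 := hNc 4; have h6 := hNc 6; have h7 := hNc 7; have h8 := hNc 8
    fun_prop
  have heq : ∀ (ε : ℂ), ε ≠ 0 → Pn ε = F ε := by
    intro ε hε
    rw [hPn, hF]
    rw [hmN ε 0, hmN ε 1, hmN ε 2, hmN ε 3, hmN ε 4, hmN ε 6, hmN ε 7, hmN ε 8]
    have e3 : (ε / t)⁻¹ ^ 3 * (ε ^ (8 - 4) * N 8 ε) = t ^ 3 * ε * N 8 ε := by
      rw [inv_div, div_pow, div_mul_eq_mul_div, div_eq_iff (pow_ne_zero 3 hε)]; ring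
    have e2 : (ε / t)⁻¹ ^ 2 * (ε ^ (7 - 4) * N 7 ε) = t ^ 2 * ε * N 7 ε := by
      rw [inv_div, div_pow, div_mul_eq_mul_div, div_eq_iff (pow_ne_zero 2 hε)]; ring
    have e1 : (ε / t)⁻¹ * (ε ^ (6 - 4) * N 6 ε) = t * ε * N 6 ε := by
      rw [inv_div, div_mul_eq_mul_div, div_eq_iff hε]; ring
    have e2' : (ε / t)⁻¹ ^ 2 * (ε ^ (8 - 4) * N 8 ε) = t ^ 2 * ε ^ 2 * N 8 ε := by
      rw [inv_div, div_pow, div_mul_eq_mul_div, div_eq_iff (pow_ne_zero 2 hε)]; ring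
    rw [e3, e2, e1, e2']
    norm_num
  have hF0 : F 0 = g ^ 4 * B₁ (1 / g) := by
    have hN0 : ∀ j, j ≤ 4 → N j 0 = m 0 j := by
      intro j hj
      rw [hmN 0 j, Nat.sub_eq_zero_of_le hj, pow_zero, one_mul]
    have hml : ∀ j, m 0 j =
        ∑ s ∈ (({0,1,2,3} : Finset (Fin 8)).powersetCard j), ∏ i ∈ s, b i := by
      intro j
      rw [hm]
      rw [← Finset.sum_subset (Finset.powersetCard_mono (Finset.subset_univ _))
        (fun s hs hns => ?_)]
      · refine Finset.sum_congr rfl fun s hs => Finset.prod_congr rfl fun i hi => ?_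
        have hil : i ∈ ({0,1,2,3} : Finset (Fin 8)) :=
          (Finset.mem_powersetCard.mp hs).1 hi
        fin_cases hil <;> rw [hu] <;> rfl
      · have hcard' : s.card = j := (Finset.mem_powersetCard.mp hs).2
        have hnsub : ¬ s ⊆ ({0,1,2,3} : Finset (Fin 8)) := by
          intro hsub
          exact hns (Finset.mem_powersetCard.mpr ⟨hsub, hcard'⟩)
        obtain ⟨i, his, hil⟩ := Finset.not_subset.mp hnsub
        have hiu : i ∈ upper := by
          rw [hupper]
          revert hil
          fin_cases i <;> decide
        refine Finset.prod_eq_zero his ?_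
        rw [hmemu 0 i hiu, zero_mul]
    rw [hF]
    simp only [zero_div, zero_mul, mul_zero, zero_pow, ne_eq, OfNat.ofNat_ne_zero,
      not_false_eq_true, sub_zero, add_zero, zero_sub, zero_add, mul_one]
    rw [hN0 0 (by norm_num), hN0 1 (by norm_num), hN0 2 (by norm_num),
      hN0 3 (by norm_num), hN0 4 (by norm_num)]
    rw [hml 0, hml 1, hml 2, hml 3, hml 4, hB₁]
    rw [show (({0,1,2,3} : Finset (Fin 8)).powersetCard 0) = {∅} from by decide]
    rw [show (({0,1,2,3} : Finset (Fin 8)).powersetCard 1) = {{0},{1},{2},{3}} from by decide]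
    rw [show (({0,1,2,3} : Finset (Fin 8)).powersetCard 2) =
      {{0,1},{0,2},{0,3},{1,2},{1,3},{2,3}} from by decide]
    rw [show (({0,1,2,3} : Finset (Fin 8)).powersetCard 3) =
      {{0,1,2},{0,1,3},{0,2,3},{1,2,3}} from by decide]
    rw [show (({0,1,2,3} : Finset (Fin 8)).powersetCard 4) = {{0,1,2,3}} from by decide]
    rw [show ({0,1,2,3} : Finset (Fin 8)) = insert 0 (insert 1 (insert 2 {3})) from rfl]
    repeat rw [Finset.sum_insert (by decide)]
    repeat rw [Finset.prod_insert (by decide)]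
    simp only [Finset.sum_singleton, Finset.prod_singleton, Finset.sum_empty,
      Finset.prod_empty]
    repeat rw [Finset.prod_insert (by decide)]
    simp only [Finset.prod_singleton]
    field_simp
    ring
  rw [← hF0]
  refine Filter.Tendsto.congr' ?_ ((hFc.tendsto 0).mono_left nhdsWithin_le_nhds)
  filter_upwards [self_mem_nhdsWithin] with x hx
  exact (heq x (by simpa using hx)).symm
end
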